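/- Let α be irrational with α*_ν + α_{ν+1} > 2 and α*_{ν+1} + α_{ν+2} > 2. Then the maximum of the product t·μ over all points (t,μ) on the line segment in ℝ² joining (q_ν, ξ_ν) and (q_{ν+1}, ξ_{ν+1}) equals F(α*_{ν+1}, α_{ν+2}⁻¹), where F(x,y) = (1-xy)²/(4(1+xy)(1-x)(1-y)). -/

import Mathlib

open Real Filter Set

/-- The function F from the paper. -/
noncomputable def Fm (x y : ℝ) : ℝ := (1 - x*y)^2 / (4*(1+x*y)*(1-x)*(1-y))

/-- The function G from the paper. -/
noncomputable def Gm (x y : ℝ) : ℝ := (x + y + 1)/4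

/-- Complete quotients of α : cq α 0 = α, cq α (n+1) = 1/{cq α n}. -/
noncomputable def cq (α : ℝ) : ℕ → ℝ
  | 0 => α
  | n+1 => (Int.fract (cq α n))⁻¹

/-- Partial quotients a_n of the continued fraction of α. -/
noncomputable def pquot (α : ℝ) (n : ℕ) : ℤ := ⌊cq α n⌋

/-- Denominators q_n of the convergents of α. -/
noncomputable def qd (α : ℝ) : ℕ → ℝ
  | 0 => 1
  | 1 => (pquot α 1 : ℝ)
  | n+2 => (pquot α (n+2) : ℝ) * qd α (n+1) + qd α n

/-- Numerators p_n of the convergents of α. -/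
noncomputable def pnum (α : ℝ) : ℕ → ℝ
  | 0 => (pquot α 0 : ℝ)
  | 1 => (pquot α 1 : ℝ) * (pquot α 0 : ℝ) + 1
  | n+2 => (pquot α (n+2) : ℝ) * pnum α (n+1) + pnum α n

/-- ξ_n = |q_n α - p_n|. -/
noncomputable def xi (α : ℝ) (n : ℕ) : ℝ := |qd α n * α - pnum α n|

/-- α*_n = [0; a_n, ..., a_1] = q_{n-1}/q_n. -/
noncomputable def astar (α : ℝ) (n : ℕ) : ℝ := qd α (n-1) / qd α n

/-- Distance from x to the nearest integer. -/
noncomputable def nidist (x : ℝ) : ℝ := |x - round x|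

/-- The ν-th convergent denominator satisfies the Legendre condition. -/
noncomputable def LegendreDen (α : ℝ) (ν : ℕ) : Prop :=
  |α - pnum α ν / qd α ν| < 1/(2 * (qd α ν)^2)

/-- ψ_α(t) = min_{1 ≤ x ≤ t} ‖xα‖. -/
noncomputable def psif (α : ℝ) (t : ℝ) : ℝ :=
  sInf {d : ℝ | ∃ x : ℤ, 1 ≤ x ∧ (x:ℝ) ≤ t ∧ d = nidist (x*α)}

section aux
variable {α : ℝ}

lemma cq_irrational (hα : Irrational α) : ∀ n, Irrational (cq α n)
  | 0 => hα
  | n+1 => by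
    have h := cq_irrational hα n
    have h2 : Irrational (Int.fract (cq α n)) := by
      rw [← Int.self_sub_floor]; exact h.sub_intCast _
    simpa [cq] using h2.inv

lemma fract_cq_pos (hα : Irrational α) (n : ℕ) : 0 < Int.fract (cq α n) := by
  rw [Int.fract_pos]
  exact fun hh => ((cq_irrational hα n).ne_int ⌊cq α n⌋) hh

lemma one_lt_cq (hα : Irrational α) (n : ℕ) : 1 < cq α (n+1) := by
  show 1 < (Int.fract (cq α n))⁻¹
  exact (one_lt_inv₀ (fract_cq_pos hα n)).mpr (Int.fract_lt_one _)

lemma cq_pos (hα : Irrational α) (n : ℕ) : 0 < cq α (n+1) :=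
  lt_trans one_pos (one_lt_cq hα n)

lemma cq_inv_succ (n : ℕ) : (cq α (n+1))⁻¹ = Int.fract (cq α n) := by
  show ((Int.fract (cq α n))⁻¹)⁻¹ = _
  rw [inv_inv]

lemma cq_floor_add (n : ℕ) : cq α n = (pquot α n : ℝ) + (cq α (n+1))⁻¹ := by
  rw [cq_inv_succ, pquot]
  have := Int.self_sub_floor (cq α n)
  linarith

lemma one_le_pquot (hα : Irrational α) (n : ℕ) : (1:ℝ) ≤ (pquot α (n+1) : ℝ) := by
  have h := one_lt_cq hα n
  have h2 : (1:ℤ) ≤ ⌊cq α (n+1)⌋ := by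
    rw [Int.le_floor]; push_cast; linarith
  rw [pquot]; exact_mod_cast h2

lemma qd_ge_one (hα : Irrational α) : ∀ n, 1 ≤ qd α n
  | 0 => le_refl _
  | 1 => by rw [qd]; exact one_le_pquot hα 0
  | n+2 => by
    have h1 := qd_ge_one hα n
    have h2 := qd_ge_one hα (n+1)
    have h3 := one_le_pquot hα (n+1)
    rw [qd]
    nlinarith

lemma qd_lt_succ (hα : Irrational α) (n : ℕ) : qd α (n+1) < qd α (n+2) := by
  have h1 := qd_ge_one hα n
  have h2 := qd_ge_one hα (n+1)
  have h3 := one_le_pquot hα (n+1)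
  rw [show qd α (n+2) = (pquot α (n+2) : ℝ) * qd α (n+1) + qd α n from rfl]
  nlinarith

/-- The deviation e_n = q_n α - p_n. -/
noncomputable def edev (α : ℝ) (n : ℕ) : ℝ := qd α n * α - pnum α n

lemma edev_zero : edev α 0 = (cq α 1)⁻¹ := by
  rw [edev, qd, pnum, pquot, cq_inv_succ]
  show 1 * α - _ = _
  rw [Int.fract, show cq α 0 = α from rfl]
  push_cast
  ring

lemma edev_rec (hα : Irrational α) : ∀ n, edev α (n+1) = - edev α n * (cq α (n+2))⁻¹
  | 0 => by
    have h0 : edev α 1 = (pquot α 1 : ℝ) * edev α 0 - 1 := by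
      rw [edev, edev, qd, qd, pnum, pnum]; push_cast; ring
    have h1 : cq α 1 = (pquot α 1 : ℝ) + (cq α 2)⁻¹ := cq_floor_add 1
    have h2 : cq α 1 ≠ 0 := ne_of_gt (cq_pos hα 0)
    have h3 : cq α 2 ≠ 0 := ne_of_gt (cq_pos hα 1)
    rw [h0, edev_zero,
      show ((pquot α 1 : ℝ)) = cq α 1 - (cq α 2)⁻¹ by linarith]
    field_simp
    ring
  | n+1 => by
    have ih := edev_rec hα n
    have h2 : cq α (n+2) ≠ 0 := ne_of_gt (cq_pos hα (n+1))
    have h3 : cq α (n+3) ≠ 0 := ne_of_gt (cq_pos hα (n+2))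
    have hrec : edev α (n+2) = (pquot α (n+2) : ℝ) * edev α (n+1) + edev α n := by
      rw [edev, edev, edev,
        show qd α (n+2) = (pquot α (n+2) : ℝ) * qd α (n+1) + qd α n from rfl,
        show pnum α (n+2) = (pquot α (n+2) : ℝ) * pnum α (n+1) + pnum α n from rfl]
      ring
    have hen : edev α n = - edev α (n+1) * cq α (n+2) := by
      rw [ih]; field_simp
    have h1 : cq α (n+2) = (pquot α (n+2) : ℝ) + (cq α (n+3))⁻¹ := cq_floor_add (n+2)
    rw [hrec, hen,
      show ((pquot α (n+2) : ℝ)) = cq α (n+2) - (cq α (n+3))⁻¹ by linarith]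
    ring

lemma xi_eq_abs (n : ℕ) : xi α n = |edev α n| := rfl

lemma xi_pos (hα : Irrational α) : ∀ n, 0 < xi α n
  | 0 => by
    rw [xi_eq_abs, edev_zero, abs_pos]
    exact inv_ne_zero (ne_of_gt (cq_pos hα 0))
  | n+1 => by
    have ih := xi_pos hα n
    rw [xi_eq_abs, edev_rec hα n, abs_mul, abs_neg, ← xi_eq_abs]
    have hc := cq_pos hα (n+1)
    have h4 : 0 < |(cq α (n+2))⁻¹| := by positivity
    positivity

lemma xi_succ (hα : Irrational α) (n : ℕ) : xi α n = cq α (n+2) * xi α (n+1) := by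
  have h2 : (0:ℝ) < cq α (n+2) := cq_pos hα (n+1)
  rw [xi_eq_abs, xi_eq_abs, edev_rec hα n, abs_mul, abs_neg]
  rw [abs_of_pos (by positivity : (0:ℝ) < (cq α (n+2))⁻¹)]
  field_simp

lemma edev_sign (hα : Irrational α) : ∀ n, edev α n = (-1)^n * xi α n
  | 0 => by
    have h0 : (0:ℝ) < cq α 1 := cq_pos hα 0
    rw [xi_eq_abs, edev_zero, abs_of_pos (by positivity : (0:ℝ) < (cq α 1)⁻¹)]
    ring
  | n+1 => by
    have ih := edev_sign hα n
    have h2 : (0:ℝ) < cq α (n+2) := cq_pos hα (n+1)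
    rw [edev_rec hα n, ih, xi_succ hα n, pow_succ]
    field_simp

lemma det_eq (hα : Irrational α) :
    ∀ n, qd α (n+1) * pnum α n - qd α n * pnum α (n+1) = (-1)^(n+1)
  | 0 => by
    rw [qd, qd, pnum, pnum]; push_cast; ring
  | n+1 => by
    have ih := det_eq hα n
    rw [show qd α (n+2) = (pquot α (n+2) : ℝ) * qd α (n+1) + qd α n from rfl,
      show pnum α (n+2) = (pquot α (n+2) : ℝ) * pnum α (n+1) + pnum α n from rfl,
      pow_succ]
    linear_combination (-1 : ℝ) * ih

lemma key_identity (hα : Irrational α) (n : ℕ) :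
    qd α (n+1) * xi α n + qd α n * xi α (n+1) = 1 := by
  have hd := det_eq hα n
  have h1 := edev_sign hα n
  have h2 := edev_sign hα (n+1)
  have hde : qd α n * edev α (n+1) - qd α (n+1) * edev α n = (-1)^(n+1) := by
    rw [edev, edev]
    linear_combination hd
  rw [h1, h2, pow_succ] at hde
  have hs : ((-1:ℝ)^n)^2 = 1 := by
    rw [← pow_mul, mul_comm, pow_mul, neg_one_sq, one_pow]
  linear_combination (-(-1:ℝ)^n) * hde +
    (1 - qd α (n+1) * xi α n - qd α n * xi α (n+1)) * hs

lemma prod_identity (hα : Irrational α) (m : ℕ) :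
    qd α (m+1) * xi α (m+1) * (astar α (m+1) + cq α (m+2)) = 1 := by
  have hk := key_identity hα m
  have hx := xi_succ hα m
  have hq : qd α (m+1) ≠ 0 := ne_of_gt (lt_of_lt_of_le one_pos (qd_ge_one hα (m+1)))
  have ha : astar α (m+1) = qd α m / qd α (m+1) := rfl
  rw [hx] at hk
  rw [ha]
  field_simp
  linear_combination hk

end aux

theorem stmt11 (α : ℝ) (hα : Irrational α) (ν : ℕ) (hν : 1 ≤ ν)
    (h1 : astar α ν + cq α (ν+1) > 2) (h2 : astar α (ν+1) + cq α (ν+2) > 2) :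
    IsGreatest ((fun p : ℝ × ℝ => p.1 * p.2) ''
        segment ℝ ((qd α ν, xi α ν) : ℝ × ℝ) (qd α (ν+1), xi α (ν+1)))
      (Fm (astar α (ν+1)) (cq α (ν+2))⁻¹) := by
  obtain ⟨m, rfl⟩ : ∃ m, ν = m + 1 := ⟨ν - 1, (Nat.succ_pred_eq_of_pos hν).symm⟩
  set a := qd α (m+1) with ha_def
  set b := qd α (m+2) with hb_def
  set c := xi α (m+1) with hc_def
  set d := xi α (m+2) with hd_def
  have ha1 : 1 ≤ a := qd_ge_one hα (m+1)
  have hab : a < b := qd_lt_succ hα m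
  have hd0 : 0 < d := xi_pos hα (m+2)
  have hcq : 1 < cq α (m+3) := one_lt_cq hα (m+2)
  have hxc : c = cq α (m+3) * d := xi_succ hα (m+1)
  have hdc : d < c := by nlinarith
  have hQ : b * c + a * d = 1 := key_identity hα (m+1)
  have hP1 : a * c * (astar α (m+1) + cq α (m+2)) = 1 := prod_identity hα m
  have hP2 : b * d * (astar α (m+2) + cq α (m+3)) = 1 := prod_identity hα (m+1)
  have hac0 : 0 < a * c := by
    have := xi_pos hα (m+1); nlinarith
  have hbd0 : 0 < b * d := by nlinarith
  have h2ac : 2 * (a * c) < 1 := by nlinarith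
  have h2bd : 2 * (b * d) < 1 := by nlinarith
  have hc0 : 0 < c := by nlinarith
  have hb0 : 0 < b := by nlinarith
  have hcq0 : cq α (m+3) ≠ 0 := by linarith
  have hy : (cq α (m+3))⁻¹ = d / c := by
    rw [eq_div_iff (ne_of_gt hc0), hxc]
    field_simp
  have hx : astar α (m+2) = a / b := rfl
  have hBD : 0 < (b - a) * (c - d) := mul_pos (by linarith) (by linarith)
  -- the maximum value
  have ha0 : 0 < a := by linarith
  have hM : Fm (astar α (m+2)) (cq α (m+3))⁻¹
      = (b*c - a*d)^2 / (4*((b-a)*(c-d))) := by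
    rw [hx, hy, Fm]
    have key : (1:ℝ) + a / b * (d / c) = 1 / (b*c) := by
      rw [eq_div_iff (by positivity : b*c ≠ (0:ℝ))]
      field_simp
      linear_combination hQ
    rw [key]
    have e1 : (0:ℝ) < 1 - a/b := by
      rw [sub_pos]; exact (div_lt_one hb0).mpr hab
    have e2 : (0:ℝ) < 1 - d/c := by
      rw [sub_pos]; exact (div_lt_one hc0).mpr hdc
    rw [div_eq_div_iff (by positivity) (ne_of_gt (by linarith : (0:ℝ) < 4*((b-a)*(c-d))))]
    field_simp
  rw [hM]
  clear_value a b c d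
  clear ha_def hb_def hc_def hd_def hxc hcq hcq0 hy hx hM hP1 hP2 h1 h2 hα hν
  obtain ⟨s, hs_def⟩ : ∃ s : ℝ, s = (b*c - 2*a*c + a*d) / (2*((b-a)*(c-d))) := ⟨_, rfl⟩
  have hs0 : 0 ≤ s := by
    rw [hs_def]
    apply div_nonneg _ (by linarith)
    linarith
  have hs1 : s ≤ 1 := by
    rw [hs_def, div_le_one (by linarith)]
    nlinarith
  have hBD2 : (2:ℝ)*((b-a)*(c-d)) ≠ 0 := ne_of_gt (by linarith)
  have hpt : ∀ t : ℝ, (1-t) • ((a, c) : ℝ × ℝ) + t • ((b, d) : ℝ × ℝ)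
      = ((1-t)*a + t*b, (1-t)*c + t*d) := by
    intro t
    simp [Prod.smul_mk, Prod.mk_add_mk, smul_eq_mul]
  constructor
  · refine ⟨(1-s) • ((a, c) : ℝ × ℝ) + s • ((b, d) : ℝ × ℝ), ?_, ?_⟩
    · rw [segment_eq_image]
      exact ⟨s, ⟨hs0, hs1⟩, rfl⟩
    · rw [hpt s]
      show ((1-s)*a + s*b) * ((1-s)*c + s*d) = (b*c - a*d)^2 / (4*((b-a)*(c-d)))
      rw [hs_def, eq_div_iff (ne_of_gt (by linarith : (0:ℝ) < 4*((b-a)*(c-d))))]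
      have hBA : b - a ≠ 0 := by linarith
      have hCD : c - d ≠ 0 := by linarith
      field_simp
      ring
  · rintro z ⟨p, hp, rfl⟩
    rw [segment_eq_image] at hp
    obtain ⟨θ, ⟨hθ0, hθ1⟩, rfl⟩ := hp
    beta_reduce
    rw [hpt θ]
    show ((1-θ)*a + θ*b) * ((1-θ)*c + θ*d) ≤ (b*c - a*d)^2 / (4*((b-a)*(c-d)))
    rw [le_div_iff₀ (by linarith : (0:ℝ) < 4*((b-a)*(c-d)))]
    nlinarith [sq_nonneg (2*(b-a)*(c-d)*θ - (b*c - 2*a*c + a*d))]
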